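/- Let κ be an uncountable regular cardinal with κ^{<κ} = κ. No κ-Sacks tree T satisfies [T] ⊆ C or [T] ∩ C = ∅, where C is the club filter on 2^κ; in fact, every κ-Sacks tree has both a branch whose 1-set contains a club and a branch whose 0-set contains a club. -/

import Mathlib

open Cardinal Set

structure PreSeq2 where
  len : Ordinal
  val : Ordinal → Bool

def PreSeq2.Canonical (s : PreSeq2) : Prop := ∀ i, s.len ≤ i → s.val i = false

def PreSeq2.Ext (s t : PreSeq2) : Prop := s.len ≤ t.len ∧ ∀ i < s.len, s.val i = t.val i

noncomputable def restrictFn2 (x : Ordinal → Bool) (a : Ordinal) : PreSeq2 :=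
  ⟨a, fun i => if i < a then x i else false⟩

noncomputable def PreSeq2.snoc (s : PreSeq2) (b : Bool) : PreSeq2 :=
  ⟨s.len + 1, fun i => if i < s.len then s.val i else if i = s.len then b else false⟩

def IsClubIn (c : Set Ordinal) (k : Ordinal) : Prop :=
  c ⊆ Set.Iio k ∧
  (∀ l, l < k → Order.IsSuccLimit l → (∀ a < l, ∃ b ∈ c, a ≤ b ∧ b < l) → l ∈ c) ∧
  (∀ a < k, ∃ b ∈ c, a ≤ b)

def Splitting (T : Set PreSeq2) (t : PreSeq2) : Prop :=
  PreSeq2.snoc t false ∈ T ∧ PreSeq2.snoc t true ∈ T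

def IsSacks (κ : Cardinal) (T : Set PreSeq2) : Prop :=
  T.Nonempty ∧
  (∀ s ∈ T, s.len < κ.ord ∧ s.Canonical) ∧
  (∀ s ∈ T, ∀ a ≤ s.len, restrictFn2 s.val a ∈ T) ∧
  (∀ s ∈ T, ∃ t ∈ T, PreSeq2.Ext s t ∧ s.len < t.len) ∧
  (∀ x : Ordinal → Bool, ∀ l, l < κ.ord → Order.IsSuccLimit l →
    (∀ a < l, restrictFn2 x a ∈ T) → restrictFn2 x l ∈ T) ∧
  (∀ s ∈ T, ∃ t ∈ T, PreSeq2.Ext s t ∧ Splitting T t) ∧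
  (∀ x : Ordinal → Bool, ∀ l, l < κ.ord → Order.IsSuccLimit l →
    (∀ a < l, ∃ b, a ≤ b ∧ b < l ∧ Splitting T (restrictFn2 x b)) →
    Splitting T (restrictFn2 x l))

def Branches2 (κ : Cardinal) (T : Set PreSeq2) : Set (Ordinal → Bool) :=
  { x | ∀ a < κ.ord, restrictFn2 x a ∈ T }

/-- The club filter on `2^κ`. -/
def clubFilterSet (κ : Cardinal) : Set (Ordinal → Bool) :=
  { x | ∃ c, IsClubIn c κ.ord ∧ ∀ i ∈ c, x i = true }

/-! ### Auxiliary lemmas -/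

open scoped Classical

lemma PreSeq2.ext2 {s t : PreSeq2} (h1 : s.len = t.len) (h2 : ∀ i, s.val i = t.val i) :
    s = t := by
  cases s; cases t
  simp only [PreSeq2.mk.injEq]
  exact ⟨h1, funext h2⟩

lemma restrict_succ (x : Ordinal → Bool) (a : Ordinal) :
    restrictFn2 x (a + 1) = PreSeq2.snoc (restrictFn2 x a) (x a) := by
  refine PreSeq2.ext2 rfl (fun i => ?_)
  simp only [restrictFn2, PreSeq2.snoc]
  by_cases h1 : i < a
  · simp [h1, h1.trans (lt_add_one a)]
  · by_cases h2 : i = a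
    · subst h2
      simp
    · have h3 : ¬ i < a + 1 := by
        rw [Ordinal.add_one_eq_succ, Order.lt_succ_iff]
        exact fun hle => h2 (le_antisymm hle (not_lt.mp h1))
      simp [h1, h2, h3]

lemma restrict_eq_of_agree {x y : Ordinal → Bool} {a : Ordinal}
    (h : ∀ i < a, x i = y i) : restrictFn2 x a = restrictFn2 y a := by
  refine PreSeq2.ext2 rfl (fun i => ?_)
  simp only [restrictFn2]
  by_cases hi : i < a
  · rw [if_pos hi, if_pos hi, h i hi]
  · rw [if_neg hi, if_neg hi]

lemma restrict_self_of_canonical {s : PreSeq2} (hc : s.Canonical) :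
    restrictFn2 s.val s.len = s := by
  refine PreSeq2.ext2 rfl (fun i => ?_)
  simp only [restrictFn2]
  by_cases hi : i < s.len
  · rw [if_pos hi]
  · rw [if_neg hi, hc i (not_lt.mp hi)]

noncomputable def greedy (T : Set PreSeq2) (b : Bool) : Ordinal → Bool :=
  WellFounded.fix Ordinal.lt_wf (fun i ih =>
    if PreSeq2.snoc ⟨i, fun j => if h : j < i then ih j h else false⟩ b ∈ T then b else !b)

lemma greedy_eq (T : Set PreSeq2) (b : Bool) (i : Ordinal) :
    greedy T b i =
      if PreSeq2.snoc (restrictFn2 (greedy T b) i) b ∈ T then b else !b := by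
  conv_lhs => rw [greedy, WellFounded.fix_eq]
  have : (⟨i, fun j => if h : j < i then WellFounded.fix Ordinal.lt_wf
      (fun i ih => if PreSeq2.snoc ⟨i, fun j => if h : j < i then ih j h else false⟩ b ∈ T
        then b else !b) j else false⟩ : PreSeq2) = restrictFn2 (greedy T b) i := by
    refine PreSeq2.ext2 rfl (fun j => ?_)
    simp only [restrictFn2, greedy]
    by_cases hj : j < i
    · rw [dif_pos hj, if_pos hj]
    · rw [dif_neg hj, if_neg hj]
  rw [this]

lemma greedy_split_val {T : Set PreSeq2} {b : Bool} {i : Ordinal}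
    (h : Splitting T (restrictFn2 (greedy T b) i)) : greedy T b i = b := by
  rw [greedy_eq]
  cases b
  · rw [if_pos h.1]
  · rw [if_pos h.2]

lemma greedy_mem {κ : Cardinal} {T : Set PreSeq2} (hT : IsSacks κ T) (b : Bool) :
    ∀ a < κ.ord, restrictFn2 (greedy T b) a ∈ T := by
  intro a
  induction a using Ordinal.limitRecOn with
  | zero =>
    intro _
    obtain ⟨s, hs⟩ := hT.1
    have h0 := hT.2.2.1 s hs 0 (zero_le)
    have heq : restrictFn2 s.val 0 = restrictFn2 (greedy T b) 0 := by
      refine PreSeq2.ext2 rfl (fun i => ?_)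
      simp [restrictFn2, not_lt_zero]
    rwa [heq] at h0
  | add_one a ih =>
    intro ha
    have haκ : a < κ.ord := (lt_add_one a).trans ha
    have hmem := ih haκ
    rw [restrict_succ, greedy_eq]
    by_cases hb : PreSeq2.snoc (restrictFn2 (greedy T b) a) b ∈ T
    · rwa [if_pos hb]
    · rw [if_neg hb]
      obtain ⟨t, ht, hext, hlen⟩ := hT.2.2.2.1 _ hmem
      have hlen' : a + 1 ≤ t.len := by
        rw [Ordinal.add_one_eq_succ, Order.succ_le_iff]
        exact hlen
      have hrt : restrictFn2 t.val (a + 1) ∈ T := hT.2.2.1 t ht _ hlen'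
      have heq : restrictFn2 t.val (a + 1)
          = PreSeq2.snoc (restrictFn2 (greedy T b) a) (t.val a) := by
        rw [restrict_succ]
        congr 1
        have hagree : ∀ i < a, t.val i = greedy T b i := by
          intro i hi
          have h := hext.2 i hi
          simp only [restrictFn2] at h
          rw [if_pos hi] at h
          exact h.symm
        exact restrict_eq_of_agree hagree
      rw [heq] at hrt
      by_cases hvb : t.val a = b
      · exact absurd (hvb ▸ hrt) hb
      · have hvnb : t.val a = !b := by
          cases b <;> cases hv : t.val a <;> simp [hv] at hvb ⊢
        rwa [hvnb] at hrt
  | limit l hl ih =>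
    intro hlκ
    exact hT.2.2.2.2.1 _ l hlκ hl (fun a ha => ih a ha (ha.trans hlκ))

lemma greedy_splitting_unbounded {κ : Cardinal} {T : Set PreSeq2} (hT : IsSacks κ T)
    (b : Bool) : ∀ a < κ.ord, ∃ e, a ≤ e ∧ e < κ.ord ∧
      Splitting T (restrictFn2 (greedy T b) e) := by
  intro a haκ
  set x := greedy T b with hx
  have hmem : restrictFn2 x a ∈ T := greedy_mem hT b a haκ
  obtain ⟨t, ht, hext, hsplit⟩ := hT.2.2.2.2.2.1 _ hmem
  have htlen : t.len < κ.ord := (hT.2.1 t ht).1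
  have halen : a ≤ t.len := hext.1
  have hvals : ∀ i < a, x i = t.val i := by
    intro i hi
    have h := hext.2 i hi
    simpa only [restrictFn2, if_pos hi] using h
  by_cases hP : ∃ e, a ≤ e ∧ e ≤ t.len ∧ Splitting T (restrictFn2 x e)
  · obtain ⟨e, h1, h2, h3⟩ := hP
    exact ⟨e, h1, lt_of_le_of_lt h2 htlen, h3⟩
  · exfalso
    have key : ∀ e, e ≤ t.len → a ≤ e → restrictFn2 x e = restrictFn2 t.val e := by
      intro e
      induction e using Ordinal.limitRecOn with
      | zero =>
        intro _ _
        refine PreSeq2.ext2 rfl (fun i => ?_)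
        simp [restrictFn2, not_lt_zero]
      | add_one e ih =>
        intro h1 h2
        rcases lt_or_eq_of_le h2 with h2' | h2'
        · have hae : a ≤ e := by
            rwa [Ordinal.add_one_eq_succ, Order.lt_succ_iff] at h2'
          have hele : e ≤ t.len := le_trans (le_of_lt (lt_add_one e)) h1
          have heq := ih hele hae
          have hnotsplit : ¬ Splitting T (restrictFn2 x e) :=
            fun hs => hP ⟨e, hae, hele, hs⟩
          have hrt : restrictFn2 t.val (e + 1) ∈ T := hT.2.2.1 t ht _ h1
          have heq' : restrictFn2 t.val (e + 1)
              = PreSeq2.snoc (restrictFn2 x e) (t.val e) := by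
            rw [restrict_succ, heq]
          have hsnoc : PreSeq2.snoc (restrictFn2 x e) (t.val e) ∈ T := heq' ▸ hrt
          have hxe : x e = t.val e := by
            rw [hx, greedy_eq, ← hx]
            cases htv : t.val e with
            | false =>
              rw [htv] at hsnoc
              have hnt : PreSeq2.snoc (restrictFn2 x e) true ∉ T :=
                fun h => hnotsplit ⟨hsnoc, h⟩
              cases b
              · rw [if_pos hsnoc]
              · rw [if_neg hnt]; rfl
            | true =>
              rw [htv] at hsnoc
              have hnf : PreSeq2.snoc (restrictFn2 x e) false ∉ T :=
                fun h => hnotsplit ⟨h, hsnoc⟩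
              cases b
              · rw [if_neg hnf]; rfl
              · rw [if_pos hsnoc]
          rw [restrict_succ, restrict_succ, heq, hxe]
        · refine PreSeq2.ext2 rfl (fun i => ?_)
          simp only [restrictFn2]
          by_cases hi : i < e + 1
          · rw [if_pos hi, if_pos hi, hvals i (by rw [h2']; exact hi)]
          · rw [if_neg hi, if_neg hi]
      | limit l hlim ih =>
        intro h1 h2
        refine PreSeq2.ext2 rfl (fun i => ?_)
        simp only [restrictFn2]
        by_cases hi : i < l
        · rw [if_pos hi, if_pos hi]
          by_cases hia : i < a
          · exact hvals i hia
          · have hisl : Order.succ i < l := hlim.succ_lt hi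
            have heqi := ih (Order.succ i) hisl (le_trans (le_of_lt hisl) h1)
              (le_trans (not_lt.mp hia) (Order.le_succ i))
            have hv := congrArg (fun s => s.val i) heqi
            simpa only [restrictFn2, if_pos (Order.lt_succ i)] using hv
        · rw [if_neg hi, if_neg hi]
    have hfinal := key t.len le_rfl halen
    rw [restrict_self_of_canonical (hT.2.1 t ht).2] at hfinal
    exact hP ⟨t.len, halen, le_rfl, hfinal ▸ hsplit⟩

lemma greedy_club {κ : Cardinal} {T : Set PreSeq2} (hT : IsSacks κ T) (b : Bool) :
    ∃ x ∈ Branches2 κ T, ∃ c, IsClubIn c κ.ord ∧ ∀ i ∈ c, x i = b := by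
  refine ⟨greedy T b, greedy_mem hT b,
    {e | e < κ.ord ∧ Splitting T (restrictFn2 (greedy T b) e)}, ⟨?_, ?_, ?_⟩, ?_⟩
  · exact fun e he => he.1
  · intro l hlκ hlim hub
    refine ⟨hlκ, hT.2.2.2.2.2.2 _ l hlκ hlim (fun a ha => ?_)⟩
    obtain ⟨e, ⟨_, hsp⟩, hle, hel⟩ := hub a ha
    exact ⟨e, hle, hel, hsp⟩
  · intro a ha
    obtain ⟨e, h1, h2, h3⟩ := greedy_splitting_unbounded hT b a ha
    exact ⟨e, ⟨h2, h3⟩, h1⟩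
  · intro i hi
    exact greedy_split_val hi.2

lemma clubs_intersect {κ : Cardinal} (hreg : κ.IsRegular) (hunc : Cardinal.aleph0 < κ)
    {c c' : Set Ordinal} (hc : IsClubIn c κ.ord) (hc' : IsClubIn c' κ.ord) :
    ∃ i, i ∈ c ∧ i ∈ c' := by
  have hord : Order.IsSuccLimit (Cardinal.ord κ) := Cardinal.isSuccLimit_ord hunc.le
  have hf : ∀ a, a < κ.ord → ∃ e, e ∈ c ∧ a ≤ e := by
    intro a ha; obtain ⟨e, he, hae⟩ := hc.2.2 a ha; exact ⟨e, he, hae⟩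
  have hg : ∀ a, a < κ.ord → ∃ e, e ∈ c' ∧ a ≤ e := by
    intro a ha; obtain ⟨e, he, hae⟩ := hc'.2.2 a ha; exact ⟨e, he, hae⟩
  set f : Ordinal → Ordinal := fun a => if h : a < κ.ord then (hf a h).choose else 0
    with hfdef
  set g : Ordinal → Ordinal := fun a => if h : a < κ.ord then (hg a h).choose else 0
    with hgdef
  have hfspec : ∀ a, a < κ.ord → f a ∈ c ∧ a ≤ f a := by
    intro a ha
    simp only [hfdef, dif_pos ha]
    exact (hf a ha).choose_spec
  have hgspec : ∀ a, a < κ.ord → g a ∈ c' ∧ a ≤ g a := by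
    intro a ha
    simp only [hgdef, dif_pos ha]
    exact (hg a ha).choose_spec
  set e : ℕ → Ordinal := fun n => Nat.rec (f 0)
    (fun n p => if n % 2 = 0 then g (p + 1) else f (p + 1)) n with hedef
  have h0κ : (0 : Ordinal) < κ.ord := by
    rw [Cardinal.lt_ord]; simpa using hreg.pos
  have hstep : ∀ n, e n < κ.ord → e (n + 1) < κ.ord ∧ e n < e (n + 1) ∧
      (n % 2 = 0 → e (n + 1) ∈ c') ∧ (n % 2 ≠ 0 → e (n + 1) ∈ c) := by
    intro n hn
    have hsn : e n + 1 < κ.ord := by rw [Ordinal.add_one_eq_succ]; exact hord.succ_lt hn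
    have hrec : e (n + 1) = if n % 2 = 0 then g (e n + 1) else f (e n + 1) := rfl
    by_cases hpar : n % 2 = 0
    · have hs := hgspec _ hsn
      have he1 : e (n + 1) = g (e n + 1) := by rw [hrec, if_pos hpar]
      refine ⟨?_, ?_, fun _ => ?_, fun h => absurd hpar h⟩
      · rw [he1]; exact hc'.1 hs.1
      · rw [he1]; exact lt_of_lt_of_le (lt_add_one _) hs.2
      · rw [he1]; exact hs.1
    · have hs := hfspec _ hsn
      have he1 : e (n + 1) = f (e n + 1) := by rw [hrec, if_neg hpar]
      refine ⟨?_, ?_, fun h => absurd h hpar, fun _ => ?_⟩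
      · rw [he1]; exact hc.1 hs.1
      · rw [he1]; exact lt_of_lt_of_le (lt_add_one _) hs.2
      · rw [he1]; exact hs.1
  have he0 : e 0 ∈ c ∧ e 0 < κ.ord := by
    have hs := hfspec 0 h0κ
    have heq0 : e 0 = f 0 := rfl
    exact ⟨heq0 ▸ hs.1, heq0 ▸ hc.1 hs.1⟩
  have hltk : ∀ n, e n < κ.ord := by
    intro n; induction n with
    | zero => exact he0.2
    | succ n ih => exact (hstep n ih).1
  have hmono : StrictMono e := strictMono_nat_of_lt_succ (fun n => (hstep n (hltk n)).2.1)
  have hevens : ∀ n, e (2 * n) ∈ c := by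
    intro n
    cases n with
    | zero => exact he0.1
    | succ m =>
      have hodd : (2 * m + 1) % 2 ≠ 0 := by omega
      have hm := (hstep (2 * m + 1) (hltk (2 * m + 1))).2.2.2 hodd
      have heq : 2 * (m + 1) = (2 * m + 1) + 1 := by ring
      rwa [heq]
  have hodds : ∀ n, e (2 * n + 1) ∈ c' := by
    intro n
    have hev : (2 * n) % 2 = 0 := by omega
    exact (hstep (2 * n) (hltk (2 * n))).2.2.1 hev
  set l : Ordinal := ⨆ n, e n with hldef
  have hlκ : l < κ.ord := by
    refine Ordinal.iSup_lt_ord_lift ?_ hltk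
    rw [hreg.cof_eq]
    simpa using hunc
  have hle : ∀ n, e n ≤ l := fun n => Ordinal.le_iSup e n
  have hlub : ∀ a, a < l → ∃ n, a < e n := by
    intro a ha
    rw [hldef, Ordinal.lt_iSup_iff] at ha
    exact ha
  have hlim : Order.IsSuccLimit l := by
    rw [Ordinal.isSuccLimit_iff, Order.isSuccPrelimit_iff_succ_lt]
    constructor
    · have h01 : e 0 < l := lt_of_lt_of_le (hmono Nat.zero_lt_one) (hle 1)
      exact ((zero_le (a := e 0)).trans_lt h01).ne'
    · intro a ha
      obtain ⟨n, hn⟩ := hlub a ha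
      calc Order.succ a ≤ e n := Order.succ_le_of_lt hn
        _ < e (n + 1) := hmono (lt_add_one n)
        _ ≤ l := hle (n + 1)
  have hmemc : l ∈ c := by
    refine hc.2.1 l hlκ hlim (fun a ha => ?_)
    obtain ⟨n, hn⟩ := hlub a ha
    refine ⟨e (2 * (n + 1)), hevens (n + 1), ?_, ?_⟩
    · exact le_of_lt (lt_of_lt_of_le hn
        (hmono.le_iff_le.mpr (show n ≤ 2 * (n + 1) by omega)))
    · exact lt_of_lt_of_le
        (hmono (show 2 * (n + 1) < 2 * (n + 1) + 1 by omega)) (hle (2 * (n + 1) + 1))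
  have hmemc' : l ∈ c' := by
    refine hc'.2.1 l hlκ hlim (fun a ha => ?_)
    obtain ⟨n, hn⟩ := hlub a ha
    refine ⟨e (2 * (n + 1) + 1), hodds (n + 1), ?_, ?_⟩
    · exact le_of_lt (lt_of_lt_of_le hn
        (hmono.le_iff_le.mpr (show n ≤ 2 * (n + 1) + 1 by omega)))
    · exact lt_of_lt_of_le
        (hmono (show 2 * (n + 1) + 1 < 2 * (n + 1) + 2 by omega)) (hle (2 * (n + 1) + 2))
  exact ⟨l, hmemc, hmemc'⟩

/-- Every κ-Sacks tree has a branch whose `1`-set contains a club and a branch whose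
`0`-set contains a club; hence no κ-Sacks tree has its branch set contained in, or
disjoint from, the club filter. -/
theorem sacks_no_decision_about_clubFilter (κ : Cardinal) (hreg : κ.IsRegular)
    (hunc : Cardinal.aleph0 < κ) (hlt : Cardinal.powerlt κ κ = κ)
    (T : Set PreSeq2) (hT : IsSacks κ T) :
    (∃ x ∈ Branches2 κ T, ∃ c, IsClubIn c κ.ord ∧ ∀ i ∈ c, x i = true) ∧
    (∃ x ∈ Branches2 κ T, ∃ c, IsClubIn c κ.ord ∧ ∀ i ∈ c, x i = false) ∧
    ¬ (Branches2 κ T ⊆ clubFilterSet κ ∨ Branches2 κ T ∩ clubFilterSet κ = ∅) := by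
  obtain ⟨xt, hxt, ct, hct, hxtv⟩ := greedy_club hT true
  obtain ⟨xf, hxf, cf, hcf, hxfv⟩ := greedy_club hT false
  refine ⟨⟨xt, hxt, ct, hct, hxtv⟩, ⟨xf, hxf, cf, hcf, hxfv⟩, ?_⟩
  rintro (hsub | hdisj)
  · obtain ⟨c', hc', htrue⟩ := hsub hxf
    obtain ⟨i, h1, h2⟩ := clubs_intersect hreg hunc hcf hc'
    have hcontra := hxfv i h1
    rw [htrue i h2] at hcontra
    exact absurd hcontra (by simp)
  · have hmem : xt ∈ Branches2 κ T ∩ clubFilterSet κ := ⟨hxt, ct, hct, hxtv⟩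
    rw [hdisj] at hmem
    exact hmem
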